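/- Let m ≥ 1, let X and Y₁, …, Y_m be sets, let R_j ⊆ X × Y_j be finite relations, and let T > 0 be a real number. For b ∈ Y_j let deg_{R_j}(b) = |{x ∈ X : (x, b) ∈ R_j}|. Then the number of tuples (b₁, …, b_m) ∈ Y₁ × ⋯ × Y_m such that deg_{R_j}(b_j) > T for every j and there exists x ∈ X with (x, b_j) ∈ R_j for every j, is at most (∏_{j=1}^{m} |R_j|) / T^{m-1}. -/

import Mathlib

/-- Let `m ≥ 1`, let `R_j ⊆ X × Y_j` be finite relations, and `T > 0` a
real.  Then the number of tuples `(b₁, …, b_m)` such that every `b_j` has degree greater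
than `T` in `R_j` and some `x ∈ X` satisfies `(x, b_j) ∈ R_j` for every `j`, is at most
`(∏_j |R_j|) / T^(m-1)`. -/
theorem stmt15 {X : Type*} (m : ℕ) (hm : 1 ≤ m) (Y : Fin m → Type*)
    (R : (j : Fin m) → Set (X × Y j)) (hfin : ∀ j, (R j).Finite)
    (T : ℝ) (hT : 0 < T) :
    (({b : (j : Fin m) → Y j |
        (∀ j, T < (({x : X | (x, b j) ∈ R j}).ncard : ℝ)) ∧
        ∃ x : X, ∀ j, (x, b j) ∈ R j}).ncard : ℝ)
      ≤ (∏ j, ((R j).ncard : ℝ)) / T ^ (m - 1) := by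
  classical
  haveI : NeZero m := ⟨by omega⟩
  set S := {b : (j : Fin m) → Y j |
      (∀ j, T < (({x : X | (x, b j) ∈ R j}).ncard : ℝ)) ∧
      ∃ x : X, ∀ j, (x, b j) ∈ R j} with hSdef
  have hdegfin : ∀ (j : Fin m) (y : Y j), ({x : X | (x, y) ∈ R j}).Finite := by
    intro j y
    exact ((hfin j).image Prod.fst).subset (fun x hx => ⟨(x, y), hx, rfl⟩)
  have hSfin : S.Finite := by
    apply (Set.Finite.pi (fun j => (hfin j).image Prod.snd)).subset
    intro b hb j _
    obtain ⟨x, hx⟩ := hb.2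
    exact ⟨(x, b j), hx j, rfl⟩
  rcases S.eq_empty_or_nonempty with he | hne
  · rw [he]
    simp only [Set.ncard_empty, Nat.cast_zero]
    positivity
  · obtain ⟨b1, hb1⟩ := hne
    obtain ⟨x0, hx0⟩ := hb1.2
    set w : ((j : Fin m) → Y j) → X := fun b =>
      if h : ∃ x : X, ∀ j, (x, b j) ∈ R j then h.choose else x0 with hw
    have hwspec : ∀ b ∈ S, ∀ j, (w b, b j) ∈ R j := by
      intro b hb j
      have h := hb.2
      simp only [hw, dif_pos h]
      exact h.choose_spec j
    set Sf := hSfin.toFinset with hSf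
    set Df : (j : Fin m) → Y j → Finset X := fun j y => (hdegfin j y).toFinset with hDf
    set Rf : (j : Fin m) → Finset (X × Y j) := fun j => (hfin j).toFinset with hRf
    set D : Finset (Σ _b : (j : Fin m) → Y j, (j : Fin m) → X) :=
      Sf.sigma (fun b => Fintype.piFinset
        (fun j => if j = 0 then ({w b} : Finset X) else Df j (b j))) with hD
    -- injection into piFinset Rf
    have hcardD : D.card ≤ ∏ j, (R j).ncard := by
      have h1 : D.card ≤ (Fintype.piFinset Rf).card := by
        apply Finset.card_le_card_of_injOn (fun p => fun j => (p.2 j, p.1 j))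
        · intro p hp
          obtain ⟨hb, hg⟩ := Finset.mem_sigma.mp hp
          have hbS : p.1 ∈ S := hSfin.mem_toFinset.mp hb
          rw [Finset.mem_coe, Fintype.mem_piFinset]
          intro j
          have hgj := Fintype.mem_piFinset.mp hg j
          rw [hRf]
          simp only [Set.Finite.mem_toFinset]
          by_cases hj : j = 0
          · subst hj
            rw [if_pos rfl, Finset.mem_singleton] at hgj
            rw [hgj]
            exact hwspec _ hbS 0
          · rw [if_neg hj] at hgj
            exact (hdegfin j (p.1 j)).mem_toFinset.mp hgj
        · intro p _ q _ h
          have h1 : p.1 = q.1 := funext fun j => congrArg Prod.snd (congrFun h j)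
          have h2 : p.2 = q.2 := funext fun j => congrArg Prod.fst (congrFun h j)
          cases p; cases q
          simp_all
      calc D.card ≤ (Fintype.piFinset Rf).card := h1
        _ = ∏ j, (Rf j).card := Fintype.card_piFinset Rf
        _ = ∏ j, (R j).ncard := by
            exact Finset.prod_congr rfl fun j _ =>
              (Set.ncard_eq_toFinset_card _ (hfin j)).symm
    have hcardD' : D.card = ∑ b ∈ Sf, ∏ j ∈ Finset.univ.erase 0, (Df j (b j)).card := by
      rw [hD, Finset.card_sigma]
      refine Finset.sum_congr rfl fun b _ => ?_
      rw [Fintype.card_piFinset]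
      rw [← Finset.mul_prod_erase Finset.univ _ (Finset.mem_univ 0)]
      rw [if_pos rfl, Finset.card_singleton, one_mul]
      exact Finset.prod_congr rfl fun j hj => by
        rw [if_neg (Finset.ne_of_mem_erase hj)]
    -- lower bound for each b
    have hlow : ∀ b ∈ Sf, T ^ (m - 1) ≤ ∏ j ∈ Finset.univ.erase 0, ((Df j (b j)).card : ℝ) := by
      intro b hb
      have hbS : b ∈ S := hSfin.mem_toFinset.mp hb
      have hcard : (Finset.univ.erase (0 : Fin m)).card = m - 1 := by
        rw [Finset.card_erase_of_mem (Finset.mem_univ _), Finset.card_univ, Fintype.card_fin]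
      calc T ^ (m - 1) = ∏ _j ∈ Finset.univ.erase (0 : Fin m), T := by
            rw [Finset.prod_const, hcard]
        _ ≤ ∏ j ∈ Finset.univ.erase 0, ((Df j (b j)).card : ℝ) := by
            apply Finset.prod_le_prod (fun _ _ => hT.le)
            intro j _
            have := (hbS.1 j).le
            rwa [Set.ncard_eq_toFinset_card _ (hdegfin j (b j))] at this
    have hmain : (Sf.card : ℝ) * T ^ (m - 1) ≤ ∏ j, ((R j).ncard : ℝ) := by
      calc (Sf.card : ℝ) * T ^ (m - 1) = ∑ _b ∈ Sf, T ^ (m - 1) := by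
            rw [Finset.sum_const, nsmul_eq_mul]
        _ ≤ ∑ b ∈ Sf, ∏ j ∈ Finset.univ.erase 0, ((Df j (b j)).card : ℝ) :=
            Finset.sum_le_sum hlow
        _ = ((∑ b ∈ Sf, ∏ j ∈ Finset.univ.erase 0, (Df j (b j)).card : ℕ) : ℝ) := by
            push_cast; rfl
        _ = (D.card : ℝ) := by rw [hcardD']
        _ ≤ ((∏ j, (R j).ncard : ℕ) : ℝ) := Nat.cast_le.mpr hcardD
        _ = ∏ j, ((R j).ncard : ℝ) := by push_cast; rfl
    rw [le_div_iff₀ (pow_pos hT _)]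
    have : S.ncard = Sf.card := Set.ncard_eq_toFinset_card _ hSfin
    rw [this]
    exact hmain
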